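/- Let E ⊆ E' be sets of finite perimeter in R^N with E' ∩ Ω = E ∩ Ω, let z ∈ ∂*E' ∩ ∂*Ω be a point of density 0 for E. Then ν_{E'}(z) = −ν_Ω(z). -/

import Mathlib

open MeasureTheory Metric Filter Set
open scoped ENNReal Topology NNReal

noncomputable section

/-- Euclidean space `ℝ^N`. -/
abbrev EucN (N : ℕ) := EuclideanSpace ℝ (Fin N)

variable {N : ℕ}

open scoped Pointwise

/-- The open upper half-ball `B⁺_{r,ν}(x)`. -/
def upperHalfBall (x ν : EucN N) (r : ℝ) : Set (EucN N) :=
  {z : EucN N | dist z x < r ∧ 0 < (inner ℝ (z - x) ν : ℝ)}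

/-- The open lower half-ball `B⁻_{r,ν}(x)`. -/
def lowerHalfBall (x ν : EucN N) (r : ℝ) : Set (EucN N) :=
  {z : EucN N | dist z x < r ∧ (inner ℝ (z - x) ν : ℝ) < 0}

/-- `ν` is the measure-theoretic outer unit normal of `E` at `x`. -/
def IsOuterNormal (E : Set (EucN N)) (x ν : EucN N) : Prop :=
  ‖ν‖ = 1 ∧
    Tendsto (fun r => volume (E ∩ upperHalfBall x ν r) / volume (upperHalfBall x ν r))
      (𝓝[>] (0:ℝ)) (𝓝 0) ∧
    Tendsto (fun r => volume (E ∩ lowerHalfBall x ν r) / volume (lowerHalfBall x ν r))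
      (𝓝[>] (0:ℝ)) (𝓝 1)

/-- The reduced boundary `∂*E`: points where an outer normal exists. -/
def redBoundary (E : Set (EucN N)) : Set (EucN N) := {x : EucN N | ∃ ν, IsOuterNormal E x ν}

/- The outer normal `ν_E(x)` (an arbitrary choice when it does not exist). -/
open Classical in
def outerNormal (E : Set (EucN N)) (x : EucN N) : EucN N :=
  if h : ∃ ν, IsOuterNormal E x ν then h.choose else 0

/-- The `(N-1)`-dimensional Hausdorff measure on `ℝ^N`. -/
def HN1 (N : ℕ) : Measure (EucN N) := μH[(N : ℝ) - 1]

/-- A set of finite perimeter: `H^{N-1}(∂*E) < ∞`. -/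
def HasFinPer (E : Set (EucN N)) : Prop :=
  MeasurableSet E ∧ HN1 N (redBoundary E) < ⊤

/-- A set of locally finite perimeter: its intersection with any ball has finite perimeter. -/
def HasLocFinPer (E : Set (EucN N)) : Prop :=
  MeasurableSet E ∧ ∀ (x : EucN N) (r : ℝ), HN1 N (redBoundary (E ∩ ball x r)) < ⊤

/-- The perimeter `P(E) = H^{N-1}(∂*E)`, as a real number. -/
def peri (E : Set (EucN N)) : ℝ := (HN1 N (redBoundary E)).toReal

lemma lhb_isOpen (x ν : EucN N) (r : ℝ) : IsOpen (lowerHalfBall x ν r) := by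
  have h1 : IsOpen {z : EucN N | dist z x < r} := isOpen_lt (continuous_id.dist continuous_const) continuous_const
  have h2 : IsOpen {z : EucN N | (inner ℝ (z - x) ν : ℝ) < 0} :=
    isOpen_lt ((continuous_id.sub continuous_const).inner continuous_const) continuous_const
  exact (h1.inter h2 : _)

lemma lhb_nonempty {ν : EucN N} (x : EucN N) (hν : ‖ν‖ = 1) {r : ℝ} (hr : 0 < r) :
    (lowerHalfBall x ν r).Nonempty := by
  refine ⟨x - (r/2) • ν, ?_, ?_⟩
  · rw [dist_eq_norm]
    have h : x - (r/2) • ν - x = -((r/2) • ν) := by abel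
    rw [h, norm_neg, norm_smul, hν, mul_one, Real.norm_eq_abs,
      abs_of_pos (by linarith : (0:ℝ) < r/2)]
    linarith
  · have : (x - (r/2) • ν) - x = -((r/2) • ν) := by abel
    rw [this, inner_neg_left, real_inner_smul_left, real_inner_self_eq_norm_mul_norm, hν]
    nlinarith

lemma lhb_vol_pos {ν : EucN N} (x : EucN N) (hν : ‖ν‖ = 1) {r : ℝ} (hr : 0 < r) :
    0 < volume (lowerHalfBall x ν r) :=
  (lhb_isOpen x ν r).measure_pos volume (lhb_nonempty x hν hr)

lemma lhb_subset_ball (x ν : EucN N) (r : ℝ) : lowerHalfBall x ν r ⊆ ball x r :=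
  fun w hw => mem_ball.2 hw.1

lemma lhb_vol_lt_top (x ν : EucN N) (r : ℝ) : volume (lowerHalfBall x ν r) < ⊤ :=
  lt_of_le_of_lt (measure_mono (lhb_subset_ball x ν r)) measure_ball_lt_top

lemma tendsto_diff_ratio {F : Set (EucN N)} (hF : MeasurableSet F) {z ν : EucN N} (hν : ‖ν‖ = 1)
    (h : Tendsto (fun r => volume (F ∩ lowerHalfBall z ν r) / volume (lowerHalfBall z ν r))
      (𝓝[>] (0:ℝ)) (𝓝 1)) :
    Tendsto (fun r => volume (lowerHalfBall z ν r \ F) / volume (ball z r))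
      (𝓝[>] (0:ℝ)) (𝓝 0) := by
  have key : ∀ r ∈ Ioi (0:ℝ),
      volume (lowerHalfBall z ν r \ F) / volume (lowerHalfBall z ν r)
        = 1 - volume (F ∩ lowerHalfBall z ν r) / volume (lowerHalfBall z ν r) := by
    intro r hr
    set L := lowerHalfBall z ν r with hL
    have hL0 : volume L ≠ 0 := (lhb_vol_pos z hν hr).ne'
    have hLtop : volume L ≠ ⊤ := (lhb_vol_lt_top z ν r).ne
    have hadd : volume (L ∩ F) + volume (L \ F) = volume L := measure_inter_add_diff L hF
    have hdiv : volume (L ∩ F) / volume L + volume (L \ F) / volume L = 1 := by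
      rw [← ENNReal.add_div, hadd, ENNReal.div_self hL0 hLtop]
    have hfin : volume (L ∩ F) / volume L ≠ ⊤ :=
      (ENNReal.div_lt_top (ne_top_of_le_ne_top hLtop (measure_mono inter_subset_left)) hL0).ne
    rw [inter_comm F L]
    exact ENNReal.eq_sub_of_add_eq hfin (by rw [add_comm] at hdiv; exact hdiv)
  have h1 : Tendsto (fun r => (1:ℝ≥0∞) -
      volume (F ∩ lowerHalfBall z ν r) / volume (lowerHalfBall z ν r))
      (𝓝[>] (0:ℝ)) (𝓝 0) := by
    have := ENNReal.Tendsto.sub (tendsto_const_nhds (x := (1:ℝ≥0∞))) h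
      (Or.inl ENNReal.one_ne_top)
    simpa using this
  have h2 : Tendsto (fun r => volume (lowerHalfBall z ν r \ F) / volume (lowerHalfBall z ν r))
      (𝓝[>] (0:ℝ)) (𝓝 0) :=
    h1.congr' (by filter_upwards [self_mem_nhdsWithin] with r hr using (key r hr).symm)
  refine tendsto_of_tendsto_of_tendsto_of_le_of_le tendsto_const_nhds h2 (fun r => zero_le)
    (fun r => ENNReal.div_le_div le_rfl (measure_mono (lhb_subset_ball z ν r)))

lemma isOuterNormal_outerNormal {E : Set (EucN N)} {x : EucN N} (h : x ∈ redBoundary E) :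
    IsOuterNormal E x (outerNormal E x) := by
  have h' : ∃ ν, IsOuterNormal E x ν := h
  rw [outerNormal, dif_pos h']
  exact h'.choose_spec

/-- If `E ⊆ E'`, `E' ∩ Ω = E ∩ Ω` and `z ∈ ∂*E' ∩ ∂*Ω` has density `0` for `E`, then
`ν_{E'}(z) = -ν_Ω(z)`. -/
theorem normal_reversed {N : ℕ} (E E' Ω : Set (EucN N))
    (hE : HasFinPer E) (hE' : HasFinPer E') (hΩ : HasFinPer Ω)
    (hsub : E ⊆ E') (hcap : E' ∩ Ω = E ∩ Ω) (z : EucN N)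
    (hz : z ∈ redBoundary E' ∩ redBoundary Ω)
    (hz0 : Tendsto (fun r => volume (E ∩ ball z r) / volume (ball z r))
      (𝓝[>] (0:ℝ)) (𝓝 0)) :
    outerNormal E' z = -outerNormal Ω z := by
  obtain ⟨hν'1, -, hν'l⟩ := isOuterNormal_outerNormal hz.1
  obtain ⟨hν1, -, hνl⟩ := isOuterNormal_outerNormal hz.2
  set ν' := outerNormal E' z with hν'def
  set ν := outerNormal Ω z with hνdef
  by_contra hne
  -- the vector w₀ lies in both open half-spaces
  have hsumne : ν' + ν ≠ 0 := fun h0 => hne (add_eq_zero_iff_eq_neg.mp h0)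
  have hip : (-1 : ℝ) < (inner ℝ ν' ν : ℝ) := by
    have hpos : 0 < ‖ν' + ν‖ := norm_pos_iff.mpr hsumne
    have hsq : ‖ν' + ν‖ ^ 2 = 2 + 2 * (inner ℝ ν' ν : ℝ) := by
      rw [norm_add_sq_real, hν'1, hν1]; ring
    nlinarith
  set w₀ : EucN N := -(ν' + ν) with hw₀def
  have hw₀ν' : (inner ℝ w₀ ν' : ℝ) < 0 := by
    rw [hw₀def, inner_neg_left, inner_add_left, real_inner_self_eq_norm_mul_norm, hν'1]
    have := real_inner_comm ν ν'
    nlinarith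
  have hw₀ν : (inner ℝ w₀ ν : ℝ) < 0 := by
    rw [hw₀def, inner_neg_left, inner_add_left, real_inner_self_eq_norm_mul_norm, hν1]
    nlinarith
  -- the cone C
  set C : Set (EucN N) := {w | (inner ℝ w ν' : ℝ) < 0} ∩ {w | (inner ℝ w ν : ℝ) < 0} with hCdef
  have hCopen : IsOpen C :=
    (isOpen_lt (continuous_id.inner continuous_const) continuous_const).inter
      (isOpen_lt (continuous_id.inner continuous_const) continuous_const)
  have hw₀0 : w₀ ≠ 0 := by
    intro h0
    rw [h0, inner_zero_left] at hw₀ν'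
    exact lt_irrefl _ hw₀ν'
  have hn : (0:ℝ) < ‖w₀‖ := norm_pos_iff.mpr hw₀0
  have hCne : (C ∩ ball 0 1).Nonempty := by
    refine ⟨(2 * ‖w₀‖)⁻¹ • w₀, ⟨?_, ?_⟩, ?_⟩
    · show (inner ℝ ((2 * ‖w₀‖)⁻¹ • w₀) ν' : ℝ) < 0
      rw [real_inner_smul_left]
      exact mul_neg_of_pos_of_neg (inv_pos.mpr (by linarith)) hw₀ν'
    · show (inner ℝ ((2 * ‖w₀‖)⁻¹ • w₀) ν : ℝ) < 0
      rw [real_inner_smul_left]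
      exact mul_neg_of_pos_of_neg (inv_pos.mpr (by linarith)) hw₀ν
    · rw [mem_ball_zero_iff, norm_smul, Real.norm_eq_abs,
        abs_of_pos (inv_pos.mpr (by linarith : (0:ℝ) < 2 * ‖w₀‖)), inv_mul_eq_div,
        div_lt_one (by linarith)]
      linarith
  set K : ℝ≥0∞ := volume (C ∩ ball 0 1) with hKdef
  have hK : 0 < K := (hCopen.inter isOpen_ball).measure_pos volume hCne
  set V : ℝ≥0∞ := volume (ball (0 : EucN N) 1) with hVdef
  have hVtop : V ≠ ⊤ := measure_ball_lt_top.ne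
  -- the intersection of the two lower half-balls
  set S : ℝ → Set (EucN N) := fun r => lowerHalfBall z ν' r ∩ lowerHalfBall z ν r with hSdef
  have hSr : ∀ r : ℝ, S r = (fun w => w - z) ⁻¹' (C ∩ ball 0 r) := by
    intro r
    ext w
    simp only [hSdef, hCdef, lowerHalfBall, mem_inter_iff, mem_setOf_eq, mem_preimage,
      mem_ball_zero_iff, ← dist_eq_norm]
    tauto
  have hscale : ∀ r : ℝ, 0 < r → C ∩ ball 0 r = r • (C ∩ ball 0 1) := by
    intro r hr
    ext w
    rw [mem_smul_set_iff_inv_smul_mem₀ hr.ne']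
    simp only [hCdef, mem_inter_iff, mem_setOf_eq, mem_ball_zero_iff]
    rw [real_inner_smul_left, real_inner_smul_left, norm_smul, Real.norm_eq_abs,
      abs_of_pos (inv_pos.mpr hr)]
    have hrinv : (0:ℝ) < r⁻¹ := inv_pos.mpr hr
    constructor
    · rintro ⟨⟨h1, h2⟩, h3⟩
      refine ⟨⟨mul_neg_of_pos_of_neg hrinv h1, mul_neg_of_pos_of_neg hrinv h2⟩, ?_⟩
      rw [inv_mul_lt_iff₀ hr, mul_one]
      exact h3
    · rintro ⟨⟨h1, h2⟩, h3⟩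
      rw [inv_mul_lt_iff₀ hr, mul_one] at h3
      refine ⟨⟨?_, ?_⟩, h3⟩
      · nlinarith
      · nlinarith
  have hvolS : ∀ r : ℝ, 0 < r → volume (S r) = ENNReal.ofReal (r ^ N) * K := by
    intro r hr
    rw [hSr r]
    have : (fun w : EucN N => w - z) = (fun w => w + (-z)) := by
      funext w; rw [sub_eq_add_neg]
    rw [this, measure_preimage_add_right, hscale r hr,
      Measure.addHaar_smul_of_nonneg volume hr.le, finrank_euclideanSpace_fin]
  have hvolB : ∀ r : ℝ, 0 < r → volume (ball z r) = ENNReal.ofReal (r ^ N) * V := by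
    intro r hr
    rw [Measure.addHaar_ball_of_pos volume z hr, finrank_euclideanSpace_fin]
  have hratio : ∀ r ∈ Ioi (0:ℝ), volume (S r) / volume (ball z r) = K / V := by
    intro r hr'
    have hr : 0 < r := mem_Ioi.mp hr'
    rw [hvolS r hr, hvolB r hr,
      ENNReal.mul_div_mul_left K V (ENNReal.ofReal_pos.mpr (pow_pos hr N)).ne'
        ENNReal.ofReal_ne_top]
  -- the three vanishing terms
  have hA := tendsto_diff_ratio hE'.1 hν'1 hν'l
  have hB := tendsto_diff_ratio hΩ.1 hν1 hνl
  have hbound : ∀ r : ℝ, volume (S r) / volume (ball z r) ≤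
      volume (lowerHalfBall z ν' r \ E') / volume (ball z r) +
      volume (lowerHalfBall z ν r \ Ω) / volume (ball z r) +
      volume (E ∩ ball z r) / volume (ball z r) := by
    intro r
    have hsub2 : S r ⊆ (lowerHalfBall z ν' r \ E') ∪ (lowerHalfBall z ν r \ Ω) ∪
        (E ∩ ball z r) := by
      intro w hw
      by_cases hwE' : w ∈ E'
      · by_cases hwΩ : w ∈ Ω
        · refine Or.inr ⟨?_, mem_ball.2 hw.1.1⟩
          have : w ∈ E ∩ Ω := hcap ▸ ⟨hwE', hwΩ⟩
          exact this.1
        · exact Or.inl (Or.inr ⟨hw.2, hwΩ⟩)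
      · exact Or.inl (Or.inl ⟨hw.1, hwE'⟩)
    calc volume (S r) / volume (ball z r)
        ≤ (volume (lowerHalfBall z ν' r \ E') + volume (lowerHalfBall z ν r \ Ω) +
            volume (E ∩ ball z r)) / volume (ball z r) := by
          refine ENNReal.div_le_div ?_ le_rfl
          refine (measure_mono hsub2).trans ?_
          refine (measure_union_le _ _).trans ?_
          exact add_le_add (measure_union_le _ _) le_rfl
      _ = _ := by rw [ENNReal.add_div, ENNReal.add_div]
  have hsum0 : Tendsto (fun r =>
      volume (lowerHalfBall z ν' r \ E') / volume (ball z r) +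
      volume (lowerHalfBall z ν r \ Ω) / volume (ball z r) +
      volume (E ∩ ball z r) / volume (ball z r)) (𝓝[>] (0:ℝ)) (𝓝 0) := by
    have := (hA.add hB).add hz0
    simpa using this
  have hS0 : Tendsto (fun r => volume (S r) / volume (ball z r)) (𝓝[>] (0:ℝ)) (𝓝 0) :=
    tendsto_of_tendsto_of_tendsto_of_le_of_le tendsto_const_nhds hsum0
      (fun r => zero_le) hbound
  have hconst : Tendsto (fun _ : ℝ => K / V) (𝓝[>] (0:ℝ)) (𝓝 0) :=
    hS0.congr' (by filter_upwards [self_mem_nhdsWithin] with r hr using hratio r hr)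
  have : K / V = 0 := tendsto_nhds_unique tendsto_const_nhds hconst
  rw [ENNReal.div_eq_zero_iff] at this
  rcases this with h | h
  · exact hK.ne' h
  · exact hVtop h
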